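/- Let G be a commutative monoid with zero, S an infinite linearly ordered set, d ≥ 1, and embed the nonempty subsets of S of size ≤ d into S^d by sending {s₁ < ⋯ < s_k} to (s₁,…,s_k, s_k,…,s_k). Then for every finite n ⊆ S, the image under this embedding of {a ⊆ n : 1 ≤ |a| ≤ d} equals n^d ∩ (image of all nonempty sets of size ≤ d). Consequently every polynomial mapping P : Finset S → G of degree ≤ d with P(∅) = 0 factors as P = φ ∘ 𝒫^d, where 𝒫^d(n) = n^d ∈ Finset(S^d) and φ : Finset(S^d) → G is additive over disjoint unions with φ(∅) = 0. -/

import Mathlib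

/-- `PolyOn d P U` : `P` is a polynomial mapping of degree `≤ d` on the ground set `U ⊆ S`. -/
def PolyOn {S : Type*} [DecidableEq S] {G : Type*} [AddCommMonoid G] :
    ℕ → (Finset S → G) → Set S → Prop
  | 0, P, U => ∀ n m : Finset S, ↑n ⊆ U → ↑m ⊆ U → P n = P m
  | d + 1, P, U => ∀ m : Finset S, ↑m ⊆ U →
      ∃ Q : Finset S → G, PolyOn d Q (U \ ↑m) ∧
        ∀ n : Finset S, ↑n ⊆ U → Disjoint n m → P (n ∪ m) = P n + Q n

/-- The embedding of nonempty subsets `{s₁ < ⋯ < s_k}` of size `≤ d` into `S^d`,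
`{s₁ < ⋯ < s_k} ↦ (s₁, …, s_k, s_k, …, s_k)`. -/
noncomputable def emb {S : Type*} [LinearOrder S] [Nonempty S] (d : ℕ) (a : Finset S) :
    Fin d → S :=
  fun i => (a.sort (· ≤ ·)).getD (min i.1 (a.card - 1)) (Classical.arbitrary S)

lemma emb_mem {S : Type*} [LinearOrder S] [Nonempty S] {d : ℕ} {a : Finset S}
    (h1 : 1 ≤ a.card) (i : Fin d) : emb d a i ∈ a := by
  unfold emb
  have hlt : min i.1 (a.card - 1) < (a.sort (· ≤ ·)).length := by
    rw [Finset.length_sort]; omega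
  rw [List.getD_eq_getElem _ _ hlt]
  rw [← Finset.mem_sort (α := S) (· ≤ ·)]
  exact List.getElem_mem hlt

lemma image_emb {S : Type*} [LinearOrder S] [Nonempty S] {d : ℕ} {a : Finset S}
    (h1 : 1 ≤ a.card) (h2 : a.card ≤ d) :
    Finset.image (emb d a) Finset.univ = a := by
  apply Finset.Subset.antisymm
  · intro x hx
    rw [Finset.mem_image] at hx
    obtain ⟨i, -, rfl⟩ := hx
    exact emb_mem h1 i
  · intro x hx
    rw [← Finset.mem_sort (α := S) (· ≤ ·)] at hx
    obtain ⟨j, hj, hxj⟩ := List.mem_iff_getElem.mp hx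
    rw [Finset.length_sort] at hj
    rw [Finset.mem_image]
    refine ⟨⟨j, lt_of_lt_of_le hj h2⟩, Finset.mem_univ _, ?_⟩
    unfold emb
    have hm : min j (a.card - 1) = j := by omega
    rw [hm, List.getD_eq_getElem _ _ (by rw [Finset.length_sort]; omega)]
    exact hxj

lemma rep {S : Type*} [LinearOrder S] {G : Type*} [AddCommMonoid G] :
    ∀ (d : ℕ) (P : Finset S → G) (U : Set S), PolyOn d P U →
      ∃ φ : Finset S → G, ∀ n : Finset S, ↑n ⊆ U →
        P n = ∑ a ∈ n.powerset.filter (fun a => a.card ≤ d), φ a := by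
  intro d
  induction d with
  | zero =>
    intro P U hP
    refine ⟨fun a => if a = (∅ : Finset S) then P ∅ else 0, fun n hn => ?_⟩
    have h0 : n.powerset.filter (fun a => a.card ≤ 0) = {∅} := by
      ext a
      simp [Nat.le_zero, Finset.card_eq_zero]
      rintro rfl; exact Finset.empty_subset _
    rw [h0, Finset.sum_singleton, if_pos rfl]
    exact hP n ∅ hn (by simp)
  | succ d ih =>
    intro P U hP
    have key : ∀ s : S, ∃ ψ : Finset S → G, s ∈ U →
        ∀ n : Finset S, ↑n ⊆ U → s ∉ n →
          P (insert s n) = P n + ∑ b ∈ n.powerset.filter (fun b => b.card ≤ d), ψ b := by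
      intro s
      by_cases hs : s ∈ U
      · obtain ⟨Q, hQpoly, hQ⟩ := hP {s} (by simpa using hs)
        obtain ⟨ψ, hψ⟩ := ih Q (U \ ↑({s} : Finset S)) hQpoly
        refine ⟨ψ, fun _ n hn hsn => ?_⟩
        have hdisj : Disjoint n ({s} : Finset S) := by
          simpa [Finset.disjoint_singleton_right] using hsn
        have h1 := hQ n hn hdisj
        rw [Finset.union_comm, ← Finset.insert_eq] at h1
        rw [h1, hψ n (by
          rw [Set.subset_diff]
          exact ⟨hn, by simpa [Set.disjoint_singleton_right] using hsn⟩)]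
      · exact ⟨fun _ => 0, fun h => absurd h hs⟩
    choose ψ hψ using key
    classical
    refine ⟨fun a => if h : a.Nonempty then ψ (a.min' h) (a.erase (a.min' h)) else P ∅,
      fun n => ?_⟩
    induction n using Finset.strongInduction with
    | _ n IH =>
      intro hn
      rcases n.eq_empty_or_nonempty with rfl | hne
      · have h0 : (∅ : Finset S).powerset.filter (fun a => a.card ≤ d + 1) = {∅} := by
          rw [Finset.powerset_empty, Finset.filter_singleton]
          simp
        rw [h0, Finset.sum_singleton]
        simp
      · set s := n.min' hne with hs
        have hsmem : s ∈ n := n.min'_mem hne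
        set n' := n.erase s with hn'def
        have hsn' : s ∉ n' := Finset.notMem_erase _ _
        have hins : insert s n' = n := Finset.insert_erase hsmem
        have hn'U : ↑n' ⊆ U := Set.Subset.trans (by exact_mod_cast Finset.erase_subset s n) hn
        have hstep := hψ s (hn hsmem) n' hn'U hsn'
        rw [hins] at hstep
        have hIH := IH n' (Finset.erase_ssubset hsmem) hn'U
        rw [hstep, hIH, ← hins, Finset.powerset_insert, Finset.filter_union]
        have hdisj : Disjoint ((n'.powerset).filter (fun a => a.card ≤ d + 1))
            (((n'.powerset).image (insert s)).filter (fun a => a.card ≤ d + 1)) := by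
          rw [Finset.disjoint_left]
          intro a ha hb
          simp only [Finset.mem_filter, Finset.mem_powerset] at ha
          simp only [Finset.mem_filter, Finset.mem_image, Finset.mem_powerset] at hb
          obtain ⟨⟨b, hb1, rfl⟩, -⟩ := hb
          exact hsn' (ha.1 (Finset.mem_insert_self s b))
        rw [Finset.sum_union hdisj]
        congr 1
        rw [Finset.filter_image]
        have hinj : ∀ b1 ∈ n'.powerset.filter (fun b => (insert s b).card ≤ d + 1),
            ∀ b2 ∈ n'.powerset.filter (fun b => (insert s b).card ≤ d + 1),
            insert s b1 = insert s b2 → b1 = b2 := by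
          intro b1 h1 b2 h2 he
          simp only [Finset.mem_filter, Finset.mem_powerset] at h1 h2
          have hs1 : s ∉ b1 := fun h => hsn' (h1.1 h)
          have hs2 : s ∉ b2 := fun h => hsn' (h2.1 h)
          rw [← Finset.erase_insert hs1, ← Finset.erase_insert hs2, he]
        rw [Finset.sum_image hinj]
        have hfe : (n'.powerset.filter (fun b => (insert s b).card ≤ d + 1)) =
            (n'.powerset.filter (fun b => b.card ≤ d)) := by
          apply Finset.filter_congr
          intro b hb
          rw [Finset.mem_powerset] at hb
          have hsb : s ∉ b := fun h => hsn' (hb h)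
          rw [Finset.card_insert_of_notMem hsb]
          simp
        rw [hfe]
        apply Finset.sum_congr rfl
        intro b hb
        simp only [Finset.mem_filter, Finset.mem_powerset] at hb
        have hsb : s ∉ b := fun h => hsn' (hb.1 h)
        have hne2 : (insert s b).Nonempty := ⟨s, Finset.mem_insert_self s b⟩
        rw [dif_pos hne2]
        have hmin : (insert s b).min' hne2 = s := by
          apply le_antisymm
          · exact Finset.min'_le _ s (Finset.mem_insert_self s b)
          · apply Finset.le_min'
            intro y hy
            apply Finset.min'_le
            rw [← hins]
            exact Finset.insert_subset_insert _ hb.1 hy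
        rw [hmin, Finset.erase_insert hsb]

theorem universal_polynomial_and_factorization {S : Type*} [LinearOrder S] [Infinite S]
    {G : Type*} [AddCommMonoid G] (d : ℕ) (hd : 1 ≤ d) :
    (∀ n : Finset S,
      ((((n.powerset.filter fun a => 1 ≤ a.card ∧ a.card ≤ d).image (emb d)) :
          Finset (Fin d → S)) : Set (Fin d → S)) =
        ↑(Fintype.piFinset fun _ : Fin d => n) ∩
          {f : Fin d → S | ∃ a : Finset S, 1 ≤ a.card ∧ a.card ≤ d ∧ f = emb d a}) ∧
    (∀ P : Finset S → G, PolyOn d P Set.univ → P ∅ = 0 →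
      ∃ φ : Finset (Fin d → S) → G,
        φ ∅ = 0 ∧
        (∀ a b : Finset (Fin d → S), Disjoint a b → φ (a ∪ b) = φ a + φ b) ∧
        ∀ n : Finset S, P n = φ (Fintype.piFinset fun _ : Fin d => n)) := by
  classical
  have part1finset : ∀ n : Finset S,
      ((n.powerset.filter fun a => 1 ≤ a.card ∧ a.card ≤ d).image (emb d)) =
        (Fintype.piFinset fun _ : Fin d => n).filter
          (fun f => ∃ a : Finset S, 1 ≤ a.card ∧ a.card ≤ d ∧ f = emb d a) := by
    intro n
    ext f
    simp only [Finset.mem_image, Finset.mem_filter, Finset.mem_powerset,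
      Fintype.mem_piFinset]
    constructor
    · rintro ⟨a, ⟨han, h1, h2⟩, rfl⟩
      exact ⟨fun i => han (emb_mem h1 i), a, h1, h2, rfl⟩
    · rintro ⟨hfn, a, h1, h2, rfl⟩
      refine ⟨a, ⟨?_, h1, h2⟩, rfl⟩
      intro x hx
      rw [← image_emb h1 h2, Finset.mem_image] at hx
      obtain ⟨i, -, rfl⟩ := hx
      exact hfn i
  constructor
  · intro n
    rw [part1finset n]
    ext f
    simp only [Finset.coe_filter, Set.mem_setOf_eq, Set.mem_inter_iff, Finset.mem_coe]
  · intro P hP hP0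
    obtain ⟨φ₀, hφ₀⟩ := rep d P Set.univ hP
    have hφ₀e : φ₀ ∅ = 0 := by
      have h := hφ₀ ∅ (by simp)
      rw [Finset.powerset_empty, Finset.filter_singleton, if_pos (by simp),
        Finset.sum_singleton] at h
      rw [← h, hP0]
    set w : (Fin d → S) → G := fun f =>
      if (∃ a : Finset S, 1 ≤ a.card ∧ a.card ≤ d ∧ f = emb d a) then
        φ₀ (Finset.image f Finset.univ) else 0 with hw
    refine ⟨fun A => ∑ f ∈ A, w f, by simp, fun a b hab => Finset.sum_union hab, fun n => ?_⟩
    have hwval : ∀ a : Finset S, 1 ≤ a.card → a.card ≤ d → w (emb d a) = φ₀ a := by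
      intro a h1 h2
      rw [hw]
      simp only
      rw [if_pos ⟨a, h1, h2, rfl⟩, image_emb h1 h2]
    have hsum : ∑ f ∈ (Fintype.piFinset fun _ : Fin d => n), w f =
        ∑ a ∈ n.powerset.filter (fun a => 1 ≤ a.card ∧ a.card ≤ d), φ₀ a := by
      rw [hw]
      rw [← Finset.sum_filter, ← part1finset n]
      rw [Finset.sum_image (fun a1 ha1 a2 ha2 he => by
        simp only [Finset.mem_coe, Finset.mem_filter, Finset.mem_powerset] at ha1 ha2
        rw [← image_emb ha1.2.1 ha1.2.2, ← image_emb ha2.2.1 ha2.2.2, he])]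
      apply Finset.sum_congr rfl
      intro a ha
      simp only [Finset.mem_filter, Finset.mem_powerset] at ha
      rw [image_emb ha.2.1 ha.2.2]
    show P n = ∑ f ∈ (Fintype.piFinset fun _ : Fin d => n), w f
    rw [hsum, hφ₀ n (by simp)]
    rw [Finset.sum_filter, Finset.sum_filter]
    apply Finset.sum_congr rfl
    intro a _
    by_cases ha : a = ∅
    · subst ha
      simp [hφ₀e]
    · have h1 : 1 ≤ a.card := Nat.one_le_iff_ne_zero.mpr (by
        simpa [Finset.card_eq_zero] using ha)
      by_cases h2 : a.card ≤ d
      · rw [if_pos h2, if_pos ⟨h1, h2⟩]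
      · rw [if_neg h2, if_neg (by tauto)]
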